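/- (Key positivity step of the Bounding Box Theorem) Let α > 0 and suppose y, z : [0,ρ] → ℝ are differentiable with y > 0 on [0,ρ], y' = αyz, z concave with z(0) = 0 and z > 0 on (0,ρ), and suppose at some t ∈ (0,ρ) that z'(t) > 0 (the region where b'' < 0 and y² is log-convex). Then ∫₀ᵗ y(s)² ds ≤ y(t)³ / y'(t); equivalently b'(t) = 2y(t) - αb(t)z(t) > 0 where b(t) = (2/y(t))∫₀ᵗ y(s)² ds. -/

import Mathlib

/-- Key positivity step of the Bounding Box Theorem: under the stated hypotheses
(with `y > 0`, `y' = αyz`, `z` concave, `z(0)=0`, `z > 0` on `(0,ρ)`, and `z' > 0`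
on `[0,t]`), one has `∫₀ᵗ y² ≤ y(t)³/y'(t)`; equivalently `b'(t) = 2y(t) - αb(t)z(t) > 0`
where `b(t) = (2/y(t)) ∫₀ᵗ y²`. -/
theorem bounding_box_positivity (α ρ : ℝ) (hα : 0 < α) (hρ : 0 < ρ) (y z z' : ℝ → ℝ)
    (hypos : ∀ s ∈ Set.Icc (0 : ℝ) ρ, 0 < y s)
    (hy : ∀ s ∈ Set.Icc (0 : ℝ) ρ, HasDerivAt y (α * y s * z s) s)
    (hzd : ∀ s ∈ Set.Icc (0 : ℝ) ρ, HasDerivAt z (z' s) s)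
    (hconc : ConcaveOn ℝ (Set.Icc 0 ρ) z)
    (hz0 : z 0 = 0)
    (hzpos : ∀ s ∈ Set.Ioo (0 : ℝ) ρ, 0 < z s)
    (t : ℝ) (ht : t ∈ Set.Ioo (0 : ℝ) ρ)
    (hz' : ∀ s ∈ Set.Icc (0 : ℝ) t, 0 < z' s) :
    (∫ s in (0 : ℝ)..t, (y s) ^ 2) ≤ (y t) ^ 3 / (α * y t * z t) ∧
    0 < 2 * y t - α * ((2 / y t) * ∫ s in (0 : ℝ)..t, (y s) ^ 2) * z t := by
  obtain ⟨ht0, htρ⟩ := ht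
  have hsub : Set.Icc (0:ℝ) t ⊆ Set.Icc 0 ρ := Set.Icc_subset_Icc le_rfl htρ.le
  have htIcc : t ∈ Set.Icc (0:ℝ) ρ := ⟨ht0.le, htρ.le⟩
  have hyt : 0 < y t := hypos t htIcc
  have hzt : 0 < z t := hzpos t ⟨ht0, htρ⟩
  have hycont : ContinuousOn y (Set.Icc 0 t) := fun s hs =>
    (hy s (hsub hs)).continuousAt.continuousWithinAt
  -- y is monotone on [0,t]
  have hmono : MonotoneOn y (Set.Icc 0 t) := by
    apply (strictMonoOn_of_deriv_pos (convex_Icc 0 t) hycont ?_).monotoneOn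
    intro x hx
    rw [interior_Icc] at hx
    have hxI : x ∈ Set.Icc (0:ℝ) ρ := hsub ⟨hx.1.le, hx.2.le⟩
    rw [(hy x hxI).deriv]
    exact mul_pos (mul_pos hα (hypos x hxI)) (hzpos x ⟨hx.1, hx.2.trans htρ⟩)
  -- integrability
  have hI1 : IntervalIntegrable (fun s => y s ^ 2) MeasureTheory.volume 0 t := by
    apply ContinuousOn.intervalIntegrable
    rw [Set.uIcc_of_le ht0.le]
    exact hycont.pow 2
  have hI2 : IntervalIntegrable (fun s => s * y s ^ 2) MeasureTheory.volume 0 t := by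
    apply ContinuousOn.intervalIntegrable
    rw [Set.uIcc_of_le ht0.le]
    exact continuousOn_id.mul (hycont.pow 2)
  have hzcont : ContinuousOn z (Set.Icc 0 t) := fun s hs =>
    (hzd s (hsub hs)).continuousAt.continuousWithinAt
  have hI3 : IntervalIntegrable (fun s => 2 * α * z s * y s ^ 2) MeasureTheory.volume 0 t := by
    apply ContinuousOn.intervalIntegrable
    rw [Set.uIcc_of_le ht0.le]
    exact ((continuousOn_const.mul hzcont).mul (hycont.pow 2))
  set A := ∫ s in (0:ℝ)..t, y s ^ 2 with hA
  set B := ∫ s in (0:ℝ)..t, s * y s ^ 2 with hB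
  -- FTC: y t ^ 2 - y 0 ^ 2 = ∫ 2αz y²
  have hftc : (∫ s in (0:ℝ)..t, 2 * α * z s * y s ^ 2) = y t ^ 2 - y 0 ^ 2 := by
    apply intervalIntegral.integral_eq_sub_of_hasDerivAt
    · intro s hs
      rw [Set.uIcc_of_le ht0.le] at hs
      have := ((hy s (hsub hs)).fun_pow 2)
      exact this.congr_deriv (by push_cast; ring)
    · exact hI3
  -- concavity: z s ≥ (s/t) * z t on [0,t]
  have hzlin : ∀ s ∈ Set.Icc (0:ℝ) t, (s / t) * z t ≤ z s := by
    intro s hs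
    have h1 : (1 - s / t) • (0:ℝ) + (s / t) • t = s := by
      rw [smul_eq_mul, smul_eq_mul, mul_zero, zero_add, div_mul_cancel₀ s ht0.ne']
    have h2 := hconc.2 (Set.left_mem_Icc.2 hρ.le) htIcc
      (show (0:ℝ) ≤ 1 - s / t by
        have : s / t ≤ 1 := (div_le_one ht0).2 hs.2
        linarith)
      (div_nonneg hs.1 ht0.le) (by ring)
    rw [h1, hz0] at h2
    simpa using h2
  -- step 1: α z t * (2 / t) * B ≤ ∫ 2αz y²
  have hstep1 : 2 * α * z t / t * B ≤ ∫ s in (0:ℝ)..t, 2 * α * z s * y s ^ 2 := by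
    have : (∫ s in (0:ℝ)..t, 2 * α * z t / t * (s * y s ^ 2)) ≤
        ∫ s in (0:ℝ)..t, 2 * α * z s * y s ^ 2 := by
      apply intervalIntegral.integral_mono_on ht0.le (hI2.const_mul _) hI3
      intro s hs
      have hys : 0 < y s := hypos s (hsub hs)
      have := hzlin s hs
      have hsq : (0:ℝ) ≤ y s ^ 2 := sq_nonneg _
      have : 2 * α * (s / t * z t) * y s ^ 2 ≤ 2 * α * z s * y s ^ 2 := by
        apply mul_le_mul_of_nonneg_right _ hsq
        apply mul_le_mul_of_nonneg_left this (by positivity)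
      calc 2 * α * z t / t * (s * y s ^ 2) = 2 * α * (s / t * z t) * y s ^ 2 := by ring
        _ ≤ 2 * α * z s * y s ^ 2 := this
    rwa [intervalIntegral.integral_const_mul] at this
  -- step 2: (t/2) * A ≤ B
  have hstep2 : t / 2 * A ≤ B := by
    have hcmem : t / 2 ∈ Set.Icc (0:ℝ) t := ⟨by positivity, by linarith⟩
    have hg : ∀ s ∈ Set.Icc (0:ℝ) t, 0 ≤ (s - t / 2) * (y s ^ 2 - y (t / 2) ^ 2) := by
      intro s hs
      rcases le_total s (t / 2) with h | h
      · have h1 : y s ≤ y (t / 2) := hmono hs hcmem h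
        have hys := (hypos s (hsub hs)).le
        nlinarith [mul_nonneg (sub_nonneg.2 h) (by nlinarith : (0:ℝ) ≤ y (t / 2) ^ 2 - y s ^ 2)]
      · have h1 : y (t / 2) ≤ y s := hmono hcmem hs h
        have hyc := (hypos (t / 2) (hsub hcmem)).le
        nlinarith [mul_nonneg (sub_nonneg.2 h) (by nlinarith : (0:ℝ) ≤ y s ^ 2 - y (t / 2) ^ 2)]
    have hint : (0:ℝ) ≤ ∫ s in (0:ℝ)..t, (s - t / 2) * (y s ^ 2 - y (t / 2) ^ 2) := by
      apply intervalIntegral.integral_nonneg ht0.le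
      intro s hs; exact hg s hs
    have hexp : (∫ s in (0:ℝ)..t, (s - t / 2) * (y s ^ 2 - y (t / 2) ^ 2)) =
        B - t / 2 * A := by
      have heq : (fun s => (s - t / 2) * (y s ^ 2 - y (t / 2) ^ 2)) =
          fun s => (s * y s ^ 2 - t / 2 * y s ^ 2) -
            (y (t / 2) ^ 2 * s - y (t / 2) ^ 2 * (t / 2)) := by
        funext s; ring
      rw [heq, intervalIntegral.integral_sub ((hI2.sub (hI1.const_mul (t / 2))))
          (((intervalIntegral.intervalIntegrable_id (μ := MeasureTheory.volume) (a := 0)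
              (b := t)).const_mul (y (t / 2) ^ 2)).sub intervalIntegrable_const),
        intervalIntegral.integral_sub hI2 (hI1.const_mul (t / 2)),
        intervalIntegral.integral_sub ((intervalIntegral.intervalIntegrable_id).const_mul
          (y (t / 2) ^ 2)) intervalIntegrable_const,
        intervalIntegral.integral_const_mul, intervalIntegral.integral_const_mul,
        intervalIntegral.integral_const, integral_id]
      simp only [← hA, ← hB, smul_eq_mul]
      ring
    rw [hexp] at hint
    linarith
  -- combine
  have hy0 : 0 < y 0 := hypos 0 (Set.left_mem_Icc.2 hρ.le)
  have hkey : α * z t * A < y t ^ 2 := by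
    have h1 : 2 * α * z t / t * (t / 2 * A) ≤ y t ^ 2 - y 0 ^ 2 := by
      calc 2 * α * z t / t * (t / 2 * A) ≤ 2 * α * z t / t * B := by
            apply mul_le_mul_of_nonneg_left hstep2 (by positivity)
        _ ≤ _ := hstep1.trans_eq hftc
    have h2 : 2 * α * z t / t * (t / 2 * A) = α * z t * A := by
      field_simp
    nlinarith [sq_nonneg (y 0)]
  constructor
  · rw [le_div_iff₀ (by positivity)]
    nlinarith
  · have h3 : y t ^ 2 * (2 / y t) = 2 * y t := by field_simp
    have h4 := mul_lt_mul_of_pos_right hkey (by positivity : (0:ℝ) < 2 / y t)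
    rw [h3] at h4
    nlinarith
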